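/- Let k be a field of characteristic ≠ 2 and n ≥ 1. Then GLIN_n(k), the subgroup of GA_n(k) generated by the linearizable automorphisms, is the smallest normal subgroup of GA_n(k) containing the tame subgroup T_n(k): it is a normal subgroup of GA_n(k), it contains T_n(k), and it is contained in every normal subgroup of GA_n(k) that contains T_n(k). -/

import Mathlib

open MvPolynomial

/-- An automorphism of `k[X_1,…,X_n]` is linear if it maps every variable to a homogeneous
polynomial of degree 1. -/
def IsLinearAut (k : Type*) [Field k] (n : ℕ)
    (φ : MvPolynomial (Fin n) k ≃ₐ[k] MvPolynomial (Fin n) k) : Prop :=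
  ∀ i, (φ (X i)).IsHomogeneous 1

/-- An automorphism is affine if it maps every variable to a polynomial of degree `≤ 1`. -/
def IsAffineAut (k : Type*) [Field k] (n : ℕ)
    (φ : MvPolynomial (Fin n) k ≃ₐ[k] MvPolynomial (Fin n) k) : Prop :=
  ∀ i, (φ (X i)).totalDegree ≤ 1

/-- An automorphism is elementary if it has the form `X_i ↦ X_i + f` with `f` not involving
`X_i`, fixing all other variables. -/
def IsElementaryAut (k : Type*) [Field k] (n : ℕ)
    (φ : MvPolynomial (Fin n) k ≃ₐ[k] MvPolynomial (Fin n) k) : Prop :=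
  ∃ (i : Fin n) (f : MvPolynomial (Fin n) k),
    f ∈ MvPolynomial.supported k {j : Fin n | j ≠ i} ∧
    φ (X i) = X i + f ∧ ∀ j, j ≠ i → φ (X j) = X j

/-- An automorphism is linearizable if it is conjugate in the automorphism group to a
linear automorphism. -/
def IsLinearizableAut (k : Type*) [Field k] (n : ℕ)
    (φ : MvPolynomial (Fin n) k ≃ₐ[k] MvPolynomial (Fin n) k) : Prop :=
  ∃ (σ M : MvPolynomial (Fin n) k ≃ₐ[k] MvPolynomial (Fin n) k),
    IsLinearAut k n M ∧ ∀ p, φ p = σ (M (σ.symm p))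

/-- `T_n(k)`: the tame subgroup of `GA_n(k)`, generated by affine and elementary
automorphisms. -/
noncomputable def TameSubgroup (k : Type*) [Field k] (n : ℕ) :
    Subgroup (MvPolynomial (Fin n) k ≃ₐ[k] MvPolynomial (Fin n) k) :=
  Subgroup.closure {φ | IsAffineAut k n φ ∨ IsElementaryAut k n φ}

/-- `GLIN_n(k)`: the subgroup of `GA_n(k)` generated by the linearizable automorphisms. -/
noncomputable def GLIN (k : Type*) [Field k] (n : ℕ) :
    Subgroup (MvPolynomial (Fin n) k ≃ₐ[k] MvPolynomial (Fin n) k) :=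
  Subgroup.closure {φ | IsLinearizableAut k n φ}

section Aux

variable {k : Type*} [Field k] {n : ℕ}

/-- Extensionality for automorphisms of the polynomial ring. -/
lemma Nagata.aut_ext {φ ψ : MvPolynomial (Fin n) k ≃ₐ[k] MvPolynomial (Fin n) k}
    (h : ∀ j, φ (X j) = ψ (X j)) : φ = ψ :=
  AlgEquiv.coe_algHom_injective (MvPolynomial.algHom_ext h)

lemma Nagata.aut_C (φ : MvPolynomial (Fin n) k ≃ₐ[k] MvPolynomial (Fin n) k) (c : k) :
    φ (C c) = C c := φ.commutes c

lemma Nagata.mul_apply (φ ψ : MvPolynomial (Fin n) k ≃ₐ[k] MvPolynomial (Fin n) k)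
    (p : MvPolynomial (Fin n) k) : (φ * ψ) p = φ (ψ p) := rfl

lemma Nagata.one_apply (p : MvPolynomial (Fin n) k) :
    (1 : MvPolynomial (Fin n) k ≃ₐ[k] MvPolynomial (Fin n) k) p = p := rfl

/-- A linearizable automorphism from a conjugation identity. -/
lemma Nagata.linz_of_eq_conj {φ σ M : MvPolynomial (Fin n) k ≃ₐ[k] MvPolynomial (Fin n) k}
    (hM : IsLinearAut k n M) (h : φ = σ * M * σ⁻¹) : IsLinearizableAut k n φ :=
  ⟨σ, M, hM, fun p => by rw [h]; rfl⟩

lemma Nagata.eq_conj_of_linz {φ : MvPolynomial (Fin n) k ≃ₐ[k] MvPolynomial (Fin n) k}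
    (h : IsLinearizableAut k n φ) :
    ∃ σ M, IsLinearAut k n M ∧ φ = σ * M * σ⁻¹ := by
  obtain ⟨σ, M, hM, h⟩ := h
  exact ⟨σ, M, hM, AlgEquiv.ext fun p => h p⟩

/-- Truncating the constant term of a polynomial of degree at most one yields a
homogeneous polynomial of degree one. -/
lemma Nagata.hdeg {p : MvPolynomial (Fin n) k}
    (hp : p.totalDegree ≤ 1) : (p - C (constantCoeff p)).IsHomogeneous 1 := by
  intro d hd
  rw [coeff_sub] at hd
  by_cases h0 : d = 0
  · subst h0
    simp [coeff_C, constantCoeff_eq] at hd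
  · rw [coeff_C, if_neg (by simpa using (Ne.symm h0)), sub_zero] at hd
    have h1 : (Finsupp.weight 1) d ≤ 1 := by
      calc (Finsupp.weight 1) d = d.sum fun _ e => e := by
            simp [Finsupp.weight, Finsupp.linearCombination, Finsupp.sum, mul_comm]
        _ ≤ p.totalDegree := le_totalDegree (mem_support_iff.mpr hd)
        _ ≤ 1 := hp
    have h2 : 1 ≤ (Finsupp.weight 1) d := by
      rcases Finsupp.ne_iff.mp h0 with ⟨i, hi⟩
      simp only [Finsupp.coe_zero, Pi.zero_apply] at hi
      calc 1 ≤ d i := Nat.one_le_iff_ne_zero.mpr hi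
        _ ≤ (Finsupp.weight 1) d := by
            simp [Finsupp.weight, Finsupp.linearCombination, Finsupp.sum, mul_comm]
            exact Finset.single_le_sum (f := fun i => d i) (fun _ _ => Nat.zero_le _)
              (Finsupp.mem_support_iff.mpr hi)
    omega

/-- The algebra endomorphism `X_j ↦ a·X_j + b_j`. -/
noncomputable def Nagata.affHom (a : k) (b : Fin n → k) :
    MvPolynomial (Fin n) k →ₐ[k] MvPolynomial (Fin n) k :=
  aeval (fun j => C a * X j + C (b j))

lemma Nagata.affHom_X (a : k) (b : Fin n → k) (j : Fin n) :
    Nagata.affHom a b (X j) = C a * X j + C (b j) := aeval_X _ _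

lemma Nagata.affHom_C (a c : k) (b : Fin n → k) :
    Nagata.affHom a b (C c) = (C c : MvPolynomial (Fin n) k) := by
  simp [Nagata.affHom, algebraMap_eq]

/-- The affine automorphism `X_j ↦ a·X_j + b_j` for `a ≠ 0`. -/
noncomputable def Nagata.affEquiv (a : k) (ha : a ≠ 0) (b : Fin n → k) :
    MvPolynomial (Fin n) k ≃ₐ[k] MvPolynomial (Fin n) k :=
  AlgEquiv.ofAlgHom (Nagata.affHom a b) (Nagata.affHom a⁻¹ (fun j => -(a⁻¹ * b j)))
    (by
      apply MvPolynomial.algHom_ext; intro j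
      simp only [AlgHom.coe_comp, Function.comp_apply, Nagata.affHom_X, map_add, map_mul,
        Nagata.affHom_C, AlgHom.id_apply]
      rw [mul_add, ← mul_assoc, ← C_mul, inv_mul_cancel₀ ha, C_1, one_mul, ← C_mul,
        add_assoc, ← C_add]
      rw [show a⁻¹ * b j + -(a⁻¹ * b j) = 0 by ring, C_0, add_zero])
    (by
      apply MvPolynomial.algHom_ext; intro j
      simp only [AlgHom.coe_comp, Function.comp_apply, Nagata.affHom_X, map_add, map_mul,
        Nagata.affHom_C, AlgHom.id_apply]
      rw [mul_add, ← mul_assoc, ← C_mul, mul_inv_cancel₀ ha, C_1, one_mul, ← C_mul,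
        add_assoc, ← C_add]
      rw [show a * -(a⁻¹ * b j) + b j = 0 by field_simp; ring, C_0, add_zero])

lemma Nagata.affEquiv_X (a : k) (ha : a ≠ 0) (b : Fin n → k) (j : Fin n) :
    Nagata.affEquiv a ha b (X j) = C a * X j + C (b j) := aeval_X _ _

/-- The algebra endomorphism `X_i ↦ a·X_i + g`, fixing the other variables. -/
noncomputable def Nagata.elemHom (i : Fin n) (a : k) (g : MvPolynomial (Fin n) k) :
    MvPolynomial (Fin n) k →ₐ[k] MvPolynomial (Fin n) k :=
  aeval (fun j => if j = i then C a * X i + g else X j)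

lemma Nagata.elemHom_X_self (i : Fin n) (a : k) (g : MvPolynomial (Fin n) k) :
    Nagata.elemHom i a g (X i) = C a * X i + g := by simp [Nagata.elemHom]

lemma Nagata.elemHom_X_ne (i : Fin n) (a : k) (g : MvPolynomial (Fin n) k) {j : Fin n}
    (hj : j ≠ i) : Nagata.elemHom i a g (X j) = X j := by simp [Nagata.elemHom, hj]

lemma Nagata.elemHom_C (i : Fin n) (a c : k) (g : MvPolynomial (Fin n) k) :
    Nagata.elemHom i a g (C c) = C c := by simp [Nagata.elemHom, algebraMap_eq]

lemma Nagata.elemHom_fixes (i : Fin n) (a : k) (g : MvPolynomial (Fin n) k)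
    {h : MvPolynomial (Fin n) k} (hh : h ∈ MvPolynomial.supported k {j : Fin n | j ≠ i}) :
    Nagata.elemHom i a g h = h := by
  refine Algebra.adjoin_induction ?_ ?_ ?_ ?_ hh
  · rintro x ⟨j, hj, rfl⟩
    exact Nagata.elemHom_X_ne i a g hj
  · intro r; exact (Nagata.elemHom i a g).commutes r
  · intro x y _ _ hx hy; rw [map_add, hx, hy]
  · intro x y _ _ hx hy; rw [map_mul, hx, hy]

/-- The automorphism `X_i ↦ a·X_i + g` (`a ≠ 0`, `g` not involving `X_i`),
fixing the other variables. -/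
noncomputable def Nagata.elemEquiv (i : Fin n) (a : k) (ha : a ≠ 0) (g : MvPolynomial (Fin n) k)
    (hg : g ∈ MvPolynomial.supported k {j : Fin n | j ≠ i}) :
    MvPolynomial (Fin n) k ≃ₐ[k] MvPolynomial (Fin n) k :=
  AlgEquiv.ofAlgHom (Nagata.elemHom i a g) (Nagata.elemHom i a⁻¹ (-(C a⁻¹ * g)))
    (by
      apply MvPolynomial.algHom_ext; intro j
      by_cases hj : j = i
      · subst hj
        simp only [AlgHom.coe_comp, Function.comp_apply, Nagata.elemHom_X_self, AlgHom.id_apply,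
          map_add, map_mul, map_neg]
        rw [Nagata.elemHom_C, Nagata.elemHom_fixes j a g hg, mul_add, ← mul_assoc, ← C_mul,
          inv_mul_cancel₀ ha, C_1, one_mul]
        ring
      · simp only [AlgHom.coe_comp, Function.comp_apply, Nagata.elemHom_X_ne _ _ _ hj,
          AlgHom.id_apply])
    (by
      apply MvPolynomial.algHom_ext; intro j
      by_cases hj : j = i
      · subst hj
        simp only [AlgHom.coe_comp, Function.comp_apply, Nagata.elemHom_X_self, AlgHom.id_apply,
          map_add, map_mul]
        rw [Nagata.elemHom_C, Nagata.elemHom_fixes j a⁻¹ _ hg, mul_add, ← mul_assoc, ← C_mul,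
          mul_inv_cancel₀ ha, C_1, one_mul, mul_neg, ← mul_assoc, ← C_mul,
          mul_inv_cancel₀ ha, C_1, one_mul]
        ring
      · simp only [AlgHom.coe_comp, Function.comp_apply, Nagata.elemHom_X_ne _ _ _ hj,
          AlgHom.id_apply])

lemma Nagata.elemEquiv_X_self (i : Fin n) (a : k) (ha : a ≠ 0) (g : MvPolynomial (Fin n) k)
    (hg : g ∈ MvPolynomial.supported k {j : Fin n | j ≠ i}) :
    Nagata.elemEquiv i a ha g hg (X i) = C a * X i + g := Nagata.elemHom_X_self i a g

lemma Nagata.elemEquiv_X_ne (i : Fin n) (a : k) (ha : a ≠ 0) (g : MvPolynomial (Fin n) k)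
    (hg : g ∈ MvPolynomial.supported k {j : Fin n | j ≠ i}) {j : Fin n} (hj : j ≠ i) :
    Nagata.elemEquiv i a ha g hg (X j) = X j := Nagata.elemHom_X_ne i a g hj

lemma Nagata.elemEquiv_fixes (i : Fin n) (a : k) (ha : a ≠ 0) (g : MvPolynomial (Fin n) k)
    (hg : g ∈ MvPolynomial.supported k {j : Fin n | j ≠ i})
    {h : MvPolynomial (Fin n) k} (hh : h ∈ MvPolynomial.supported k {j : Fin n | j ≠ i}) :
    Nagata.elemEquiv i a ha g hg h = h := Nagata.elemHom_fixes i a g hh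

end Aux

section Main

variable {k : Type*} [Field k] {n : ℕ}

lemma Nagata.glin_normal : (GLIN k n).Normal := by
  constructor
  intro x hx g
  refine Subgroup.closure_induction
    (p := fun x _ => g * x * g⁻¹ ∈ GLIN k n) ?_ ?_ ?_ ?_ hx
  · intro y hy
    obtain ⟨σ, M, hM, hy⟩ := Nagata.eq_conj_of_linz hy
    refine Subgroup.subset_closure (Nagata.linz_of_eq_conj (σ := g * σ) hM ?_)
    rw [hy]; group
  · simpa using (GLIN k n).one_mem
  · intro x y _ _ hx hy
    have : g * (x * y) * g⁻¹ = (g * x * g⁻¹) * (g * y * g⁻¹) := by group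
    rw [this]; exact mul_mem hx hy
  · intro x _ hx
    have : g * x⁻¹ * g⁻¹ = (g * x * g⁻¹)⁻¹ := by group
    rw [this]; exact inv_mem hx

lemma Nagata.tame_le_glin (h2 : (2 : k) ≠ 0) : TameSubgroup k n ≤ GLIN k n := by
  rw [TameSubgroup, Subgroup.closure_le]
  rintro φ (hφ | hφ)
  · -- affine
    set b : Fin n → k := fun j => constantCoeff (φ (X j)) with hb
    obtain ⟨τ, hτX⟩ : ∃ τ : MvPolynomial (Fin n) k ≃ₐ[k] MvPolynomial (Fin n) k,
        ∀ j, τ (X j) = X j + C (b j) := by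
      refine ⟨Nagata.affEquiv 1 one_ne_zero b, fun j => ?_⟩
      rw [Nagata.affEquiv_X, C_1, one_mul]
    obtain ⟨τ', hτ'X⟩ : ∃ τ' : MvPolynomial (Fin n) k ≃ₐ[k] MvPolynomial (Fin n) k,
        ∀ j, τ' (X j) = X j - C (b j) := by
      refine ⟨Nagata.affEquiv 1 one_ne_zero (fun j => -(b j)), fun j => ?_⟩
      rw [Nagata.affEquiv_X, C_1, one_mul, C_neg, sub_eq_add_neg]
    obtain ⟨ν, hνX⟩ : ∃ ν : MvPolynomial (Fin n) k ≃ₐ[k] MvPolynomial (Fin n) k,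
        ∀ j, ν (X j) = -X j := by
      refine ⟨Nagata.affEquiv (-1) (by norm_num) 0, fun j => ?_⟩
      rw [Nagata.affEquiv_X]
      simp [C_neg]
    obtain ⟨μ, hμX⟩ : ∃ μ : MvPolynomial (Fin n) k ≃ₐ[k] MvPolynomial (Fin n) k,
        ∀ j, μ (X j) = -X j + C (b j) := by
      refine ⟨Nagata.affEquiv (-1) (by norm_num) b, fun j => ?_⟩
      rw [Nagata.affEquiv_X, C_neg, C_1, neg_mul, one_mul]
    obtain ⟨σ2, hσ2X⟩ : ∃ σ2 : MvPolynomial (Fin n) k ≃ₐ[k] MvPolynomial (Fin n) k,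
        ∀ j, σ2 (X j) = X j - C (b j / 2) := by
      refine ⟨Nagata.affEquiv 1 one_ne_zero (fun j => -(b j / 2)), fun j => ?_⟩
      rw [Nagata.affEquiv_X, C_1, one_mul, C_neg, sub_eq_add_neg]
    have hττ' : τ' * τ = 1 := by
      apply Nagata.aut_ext
      intro j
      rw [Nagata.mul_apply, Nagata.one_apply, hτX, map_add, hτ'X, Nagata.aut_C]
      ring
    set L : MvPolynomial (Fin n) k ≃ₐ[k] MvPolynomial (Fin n) k := φ * τ' with hLdef
    have hLX : ∀ j, L (X j) = φ (X j) - C (b j) := by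
      intro j
      rw [hLdef, Nagata.mul_apply, hτ'X, map_sub, Nagata.aut_C]
    have hL : IsLinearAut k n L := by
      intro j
      rw [hLX j, hb]
      exact Nagata.hdeg (hφ j)
    have hLmem : L ∈ GLIN k n :=
      Subgroup.subset_closure (Nagata.linz_of_eq_conj (σ := 1) hL (by group))
    have hνlin : IsLinearAut k n ν := by
      intro j
      rw [hνX]
      exact (isHomogeneous_X k j).neg
    have key : ∀ j, (C (b j) : MvPolynomial (Fin n) k) = C (b j / 2) + C (b j / 2) := by
      intro j
      rw [← C_add]; congr 1; field_simp; ring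
    have hμσ : μ * σ2 = σ2 * ν := by
      apply Nagata.aut_ext
      intro j
      rw [Nagata.mul_apply, Nagata.mul_apply, hσ2X, map_sub, hμX, Nagata.aut_C, hνX,
        map_neg, hσ2X]
      linear_combination key j
    have hμmem : μ ∈ GLIN k n := by
      refine Subgroup.subset_closure (Nagata.linz_of_eq_conj (σ := σ2) hνlin ?_)
      rw [← hμσ]; group
    have hνmem : ν ∈ GLIN k n :=
      Subgroup.subset_closure (Nagata.linz_of_eq_conj (σ := 1) hνlin (by group))
    have hτeq : τ = ν * μ := by
      apply Nagata.aut_ext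
      intro j
      rw [Nagata.mul_apply, hτX, hμX, map_add, map_neg, hνX, Nagata.aut_C]
      ring
    have hτmem : τ ∈ GLIN k n := by rw [hτeq]; exact mul_mem hνmem hμmem
    have hφeq : φ = L * τ := by rw [hLdef, mul_assoc, hττ', mul_one]
    rw [hφeq]; exact mul_mem hLmem hτmem
  · -- elementary
    obtain ⟨i, f, hf, hXi, hXj⟩ := hφ
    have hf2 : -(C (2:k)⁻¹ * f) ∈ MvPolynomial.supported k {j : Fin n | j ≠ i} :=
      neg_mem (mul_mem (Subalgebra.algebraMap_mem _ (2:k)⁻¹) hf)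
    obtain ⟨s, hsX, hsXj, hsfix⟩ :
        ∃ s : MvPolynomial (Fin n) k ≃ₐ[k] MvPolynomial (Fin n) k,
          s (X i) = -X i ∧ (∀ j, j ≠ i → s (X j) = X j) ∧
          (∀ h : MvPolynomial (Fin n) k,
            h ∈ MvPolynomial.supported k {j : Fin n | j ≠ i} → s h = h) := by
      refine ⟨Nagata.elemEquiv i (-1) (by norm_num) 0 (zero_mem _), ?_, ?_, ?_⟩
      · rw [Nagata.elemEquiv_X_self]; simp [C_neg]
      · intro j hj; exact Nagata.elemEquiv_X_ne _ _ _ _ _ hj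
      · intro h hh; exact Nagata.elemEquiv_fixes _ _ _ _ _ hh
    obtain ⟨ν, hνX, hνXj, hνfix⟩ :
        ∃ ν : MvPolynomial (Fin n) k ≃ₐ[k] MvPolynomial (Fin n) k,
          ν (X i) = -X i + f ∧ (∀ j, j ≠ i → ν (X j) = X j) ∧
          (∀ h : MvPolynomial (Fin n) k,
            h ∈ MvPolynomial.supported k {j : Fin n | j ≠ i} → ν h = h) := by
      refine ⟨Nagata.elemEquiv i (-1) (by norm_num) f hf, ?_, ?_, ?_⟩
      · rw [Nagata.elemEquiv_X_self, C_neg, C_1, neg_mul, one_mul]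
      · intro j hj; exact Nagata.elemEquiv_X_ne _ _ _ _ _ hj
      · intro h hh; exact Nagata.elemEquiv_fixes _ _ _ _ _ hh
    obtain ⟨σ, hσX, hσXj, hσfix⟩ :
        ∃ σ : MvPolynomial (Fin n) k ≃ₐ[k] MvPolynomial (Fin n) k,
          σ (X i) = X i - C (2:k)⁻¹ * f ∧ (∀ j, j ≠ i → σ (X j) = X j) ∧
          (∀ h : MvPolynomial (Fin n) k,
            h ∈ MvPolynomial.supported k {j : Fin n | j ≠ i} → σ h = h) := by
      refine ⟨Nagata.elemEquiv i 1 one_ne_zero (-(C (2:k)⁻¹ * f)) hf2, ?_, ?_, ?_⟩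
      · rw [Nagata.elemEquiv_X_self, C_1, one_mul, sub_eq_add_neg]
      · intro j hj; exact Nagata.elemEquiv_X_ne _ _ _ _ _ hj
      · intro h hh; exact Nagata.elemEquiv_fixes _ _ _ _ _ hh
    have hslin : IsLinearAut k n s := by
      intro j
      by_cases hj : j = i
      · subst hj
        rw [hsX]
        exact (isHomogeneous_X k j).neg
      · rw [hsXj j hj]
        exact isHomogeneous_X k j
    have key : (C ((2:k)⁻¹) : MvPolynomial (Fin n) k) + C ((2:k)⁻¹) = 1 := by
      rw [← C_add, ← C_1]; congr 1; field_simp; norm_num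
    have hCf : (C ((2:k)⁻¹) * f) ∈ MvPolynomial.supported k {j : Fin n | j ≠ i} :=
      mul_mem (Subalgebra.algebraMap_mem _ (2:k)⁻¹) hf
    have hνσ : ν * σ = σ * s := by
      apply Nagata.aut_ext
      intro j
      by_cases hj : j = i
      · subst hj
        rw [Nagata.mul_apply, Nagata.mul_apply, hσX, map_sub, hνX, hνfix _ hCf, hsX,
          map_neg, hσX]
        linear_combination (-f) * key
      · rw [Nagata.mul_apply, Nagata.mul_apply, hσXj j hj, hνXj j hj, hsXj j hj, hσXj j hj]
    have hνmem : ν ∈ GLIN k n := by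
      refine Subgroup.subset_closure (Nagata.linz_of_eq_conj (σ := σ) hslin ?_)
      rw [← hνσ]; group
    have hsmem : s ∈ GLIN k n :=
      Subgroup.subset_closure (Nagata.linz_of_eq_conj (σ := 1) hslin (by group))
    have hφeq : φ = s * ν := by
      apply Nagata.aut_ext
      intro j
      by_cases hj : j = i
      · subst hj
        rw [Nagata.mul_apply, hXi, hνX, map_add, map_neg, hsX, hsfix _ hf]
        ring
      · rw [Nagata.mul_apply, hXj j hj, hνXj j hj, hsXj j hj]
    rw [hφeq]; exact mul_mem hsmem hνmem

lemma Nagata.glin_min (H : Subgroup (MvPolynomial (Fin n) k ≃ₐ[k] MvPolynomial (Fin n) k))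
    (hN : H.Normal) (hTH : TameSubgroup k n ≤ H) : GLIN k n ≤ H := by
  rw [GLIN, Subgroup.closure_le]
  intro φ hφ
  obtain ⟨σ, M, hM, hφ⟩ := Nagata.eq_conj_of_linz hφ
  have hMH : M ∈ H :=
    hTH (Subgroup.subset_closure (Or.inl fun i => (hM i).totalDegree_le))
  rw [hφ]
  exact hN.conj_mem M hMH σ

end Main

/-- Over a field of characteristic `≠ 2`, `GLIN_n(k)` is the smallest normal subgroup of
`GA_n(k)` containing the tame subgroup `T_n(k)`: it is normal, contains `T_n(k)`, and is
contained in every normal subgroup containing `T_n(k)`. -/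
theorem nagata_stmt_18 (k : Type*) [Field k] (h2 : (2 : k) ≠ 0) (n : ℕ) (hn : 1 ≤ n) :
    (GLIN k n).Normal ∧
    TameSubgroup k n ≤ GLIN k n ∧
    ∀ H : Subgroup (MvPolynomial (Fin n) k ≃ₐ[k] MvPolynomial (Fin n) k),
      H.Normal → TameSubgroup k n ≤ H → GLIN k n ≤ H := by
  exact ⟨Nagata.glin_normal, Nagata.tame_le_glin h2, Nagata.glin_min⟩
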